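/- Let f be a sense-preserving harmonic mapping on the unit disk D with J_f(0) = 1, and suppose |A_f(z)| ≤ α for all z ∈ D. Then for all z ∈ D, (1-|z|)^{2α-2}/(1+|z|)^{2α+2} ≤ J_f(z) ≤ (1+|z|)^{2α-2}/(1-|z|)^{2α+2}. -/

import Mathlib

open Complex Metric Set

noncomputable section

/-- The open unit disk in ℂ. -/
def 𝔻 : Set ℂ := Metric.ball (0 : ℂ) 1

/-- Dilatation ω = g'/h' of a harmonic mapping f = h + conj g. -/
def dil (h g : ℂ → ℂ) (z : ℂ) : ℂ := deriv g z / deriv h z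

/-- Harmonic pre-Schwarzian P_f = h''/h' - conj(ω)·ω'/(1-|ω|²). -/
def Pf (h g : ℂ → ℂ) (z : ℂ) : ℂ :=
  deriv (deriv h) z / deriv h z -
    (starRingEnd ℂ) (dil h g z) * deriv (dil h g) z /
      (((1 - ‖dil h g z‖ ^ 2 : ℝ) : ℂ))

/-- The operator A_f(z) = ((1-|z|²)/2)·P_f(z) - conj z. -/
def Af (h g : ℂ → ℂ) (z : ℂ) : ℂ :=
  (((1 - ‖z‖ ^ 2 : ℝ) : ℂ)) / 2 * Pf h g z - (starRingEnd ℂ) z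

/-- The operator A_φ for an analytic φ. -/
def Aan (φ : ℂ → ℂ) (z : ℂ) : ℂ :=
  (((1 - ‖z‖ ^ 2 : ℝ) : ℂ)) / 2 * (deriv (deriv φ) z / deriv φ z) -
    (starRingEnd ℂ) z

/-- Jacobian J_f = |h'|² - |g'|². -/
def Jf (h g : ℂ → ℂ) (z : ℂ) : ℝ :=
  ‖deriv h z‖ ^ 2 - ‖deriv g z‖ ^ 2

/-- f = h + conj g is a sense-preserving harmonic mapping on 𝔻. -/
def SensePreserving (h g : ℂ → ℂ) : Prop :=
  (∀ z ∈ 𝔻, AnalyticAt ℂ h z) ∧ (∀ z ∈ 𝔻, AnalyticAt ℂ g z) ∧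
  (∀ z ∈ 𝔻, deriv h z ≠ 0) ∧ (∀ z ∈ 𝔻, ‖dil h g z‖ < 1)

/-- Hyperbolic (Poincaré) distance on 𝔻, with density 1/(1-|z|²). -/
def hypDist (z w : ℂ) : ℝ :=
  (1 / 2) * Real.log
    ((1 + ‖(z - w) / (1 - (starRingEnd ℂ) w * z)‖) /
     (1 - ‖(z - w) / (1 - (starRingEnd ℂ) w * z)‖))

/-- Wirtinger derivative ∂_z of a real-valued function. -/
def wirtinger (u : ℂ → ℝ) (z : ℂ) : ℂ :=
  ((fderiv ℝ u z 1 : ℝ) : ℂ) / 2 - Complex.I * ((fderiv ℝ u z Complex.I : ℝ) : ℂ) / 2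

lemma mem_disk {z : ℂ} : z ∈ 𝔻 ↔ ‖z‖ < 1 := by
  simp [𝔻, Metric.mem_ball, Complex.dist_eq]

lemma analyticAt_deriv {f : ℂ → ℂ} {z : ℂ} (hf : AnalyticAt ℂ f z) :
    AnalyticAt ℂ (deriv f) z := by
  have h1 : AnalyticAt ℂ (fderiv ℂ f) z := hf.fderiv
  have h2 : AnalyticAt ℂ (fun w => fderiv ℂ f w 1) z :=
    ((ContinuousLinearMap.apply ℂ ℂ (1 : ℂ)).analyticAt _).comp h1
  simpa only [fderiv_apply_one_eq_deriv] using h2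

lemma cast2 (x : ℂ) : ((‖x‖ ^ 2 : ℝ) : ℂ) = x * (starRingEnd ℂ) x := by
  rw [← Complex.normSq_eq_norm_sq, Complex.mul_conj]

lemma alg (a b c d : ℂ) (ha : a ≠ 0) (hc : ‖c‖ < ‖a‖) :
    b / a - (starRingEnd ℂ) (c / a) * ((d * a - c * b) / a ^ 2) /
        (((1 - ‖c / a‖ ^ 2 : ℝ) : ℂ))
      = ((starRingEnd ℂ) a * b - (starRingEnd ℂ) c * d) /
        ((‖a‖ ^ 2 - ‖c‖ ^ 2 : ℝ) : ℂ) := by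
  have ha' : (starRingEnd ℂ) a ≠ 0 := by simpa using ha
  have h2 : (0:ℝ) < ‖a‖ ^ 2 - ‖c‖ ^ 2 := by
    nlinarith [norm_nonneg c]
  have e2 : ((‖a‖ ^ 2 - ‖c‖ ^ 2 : ℝ) : ℂ)
      = a * (starRingEnd ℂ) a - c * (starRingEnd ℂ) c := by
    push_cast [← cast2]; ring
  have hK : a * (starRingEnd ℂ) a - c * (starRingEnd ℂ) c ≠ 0 := by
    rw [← e2]; exact_mod_cast h2.ne'
  have e1 : (((1 - ‖c / a‖ ^ 2 : ℝ) : ℂ))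
      = (a * (starRingEnd ℂ) a - c * (starRingEnd ℂ) c) / (a * (starRingEnd ℂ) a) := by
    rw [Complex.ofReal_sub, Complex.ofReal_one, cast2, map_div₀]
    field_simp
  rw [e1, e2, map_div₀, eq_div_iff hK, div_div_eq_mul_div, sub_mul, div_mul_cancel₀ _ hK]
  field_simp
  ring

/-- Jacobian is positive on the disk. -/
lemma Jf_pos {h g : ℂ → ℂ} (hf : SensePreserving h g) {z : ℂ} (hz : z ∈ 𝔻) :
    0 < Jf h g z := by
  obtain ⟨-, -, hh', hω⟩ := hf
  have h1 := hh' z hz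
  have h2 := hω z hz
  have h3 : ‖deriv g z‖ < ‖deriv h z‖ := by
    have := h2
    rw [dil, norm_div, div_lt_one (by simpa [norm_pos_iff] using h1)] at this
    exact this
  have : 0 ≤ ‖deriv g z‖ := norm_nonneg _
  simp only [Jf]
  nlinarith

/-- Pf equals the clean quotient on the disk. -/
lemma Pf_eq {h g : ℂ → ℂ} (hf : SensePreserving h g) {z : ℂ} (hz : z ∈ 𝔻) :
    Pf h g z = ((starRingEnd ℂ) (deriv h z) * deriv (deriv h) z
        - (starRingEnd ℂ) (deriv g z) * deriv (deriv g) z) / ((Jf h g z : ℝ) : ℂ) := by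
  obtain ⟨hh, hg, hh', hω⟩ := hf
  set a := deriv h z with ha_def
  set b := deriv (deriv h) z
  set c := deriv g z with hc_def
  set d := deriv (deriv g) z
  have ha : a ≠ 0 := hh' z hz
  have hca : ‖c‖ < ‖a‖ := by
    have := hω z hz
    rw [dil, norm_div, div_lt_one (by simpa [norm_pos_iff] using ha)] at this
    exact this
  have hda : DifferentiableAt ℂ (deriv h) z := (analyticAt_deriv (hh z hz)).differentiableAt
  have hdc : DifferentiableAt ℂ (deriv g) z := (analyticAt_deriv (hg z hz)).differentiableAt
  have hdil : deriv (dil h g) z = (d * a - c * b) / a ^ 2 := by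
    have : deriv (fun x => deriv g x / deriv h x) z
        = (deriv (deriv g) z * deriv h z - deriv g z * deriv (deriv h) z) / (deriv h z) ^ 2 :=
      deriv_div hdc hda ha
    exact this
  have : Pf h g z = b / a - (starRingEnd ℂ) (c / a) * ((d * a - c * b) / a ^ 2) /
      (((1 - ‖c / a‖ ^ 2 : ℝ) : ℂ)) := by
    rw [Pf, hdil]; rfl
  rw [this, alg a b c d ha hca]
  rfl

lemma curve_deriv {F : ℂ → ℂ} {F' : ℂ} (e : ℂ) {t : ℝ}
    (hF : HasDerivAt F F' ((t:ℂ)*e)) : HasDerivAt (fun s : ℝ => F ((s:ℂ)*e)) (e * F') t := by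
  have hγ : HasDerivAt (fun s : ℝ => (s:ℂ)*e) e t := by
    simpa using (Complex.ofRealCLM.hasDerivAt (x := t)).mul_const e
  have := (hF.hasFDerivAt.restrictScalars ℝ).comp_hasDerivAt t hγ
  simpa [smul_eq_mul, mul_comm, Function.comp_def] using this

lemma conj_curve {c : ℝ → ℂ} {c' : ℂ} {t : ℝ} (hc : HasDerivAt c c' t) :
    HasDerivAt (fun s => (starRingEnd ℂ) (c s)) ((starRingEnd ℂ) c') t := by
  have := (Complex.conjCLE.toContinuousLinearMap.hasFDerivAt (x := c t)).comp_hasDerivAt t hc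
  simpa [Function.comp_def] using this

lemma re_curve {c : ℝ → ℂ} {c' : ℂ} {t : ℝ} (hc : HasDerivAt c c' t) :
    HasDerivAt (fun s => (c s).re) c'.re t := by
  have := (Complex.reCLM.hasFDerivAt (x := c t)).comp_hasDerivAt t hc
  simpa [Function.comp_def] using this

lemma keyDeriv (h g : ℂ → ℂ) (hf : SensePreserving h g) (e : ℂ) (he : ‖e‖ = 1)
    {t : ℝ} (ht : |t| < 1) :
    HasDerivAt (fun s : ℝ => Real.log (1 - s^2) + (1/2) * Real.log (Jf h g ((s:ℂ)*e)))
      (2 * (e * Af h g ((t:ℂ)*e)).re / (1 - t^2)) t := by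
  obtain ⟨hh, hg, hh', hω⟩ := hf
  set w := (t:ℂ)*e with hw_def
  have hw : w ∈ 𝔻 := by
    rw [mem_disk, hw_def, norm_mul, he, mul_one, Complex.norm_real, Real.norm_eq_abs]; exact ht
  have ht2 : (0:ℝ) < 1 - t^2 := by
    have := abs_lt.mp ht; nlinarith
  set a := deriv h w with ha_def
  set b := deriv (deriv h) w with hb_def
  set c := deriv g w with hc_def
  set d := deriv (deriv g) w with hd_def
  set J := Jf h g w with hJ_def
  have hJpos : 0 < J := Jf_pos ⟨hh, hg, hh', hω⟩ hw
  -- derivative of log(1-s^2)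
  have L1 : HasDerivAt (fun s : ℝ => Real.log (1 - s^2)) (-(2*t)/(1-t^2)) t := by
    have p1 : HasDerivAt (fun s : ℝ => 1 - s^2) (-(2*t)) t := by
      simpa using ((hasDerivAt_pow 2 t).const_sub 1)
    exact p1.log (ne_of_gt ht2)
  -- derivatives of the analytic pieces along the ray
  have A1 : HasDerivAt (fun s : ℝ => deriv h ((s:ℂ)*e)) (e*b) t :=
    curve_deriv e ((analyticAt_deriv (hh w hw)).differentiableAt.hasDerivAt)
  have A2 : HasDerivAt (fun s : ℝ => deriv g ((s:ℂ)*e)) (e*d) t :=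
    curve_deriv e ((analyticAt_deriv (hg w hw)).differentiableAt.hasDerivAt)
  have r1 : HasDerivAt (fun s : ℝ => (deriv h ((s:ℂ)*e) * (starRingEnd ℂ) (deriv h ((s:ℂ)*e))).re)
      ((e*b * (starRingEnd ℂ) a + a * (starRingEnd ℂ) (e*b)).re) t :=
    re_curve (A1.mul (conj_curve A1))
  have r2 : HasDerivAt (fun s : ℝ => (deriv g ((s:ℂ)*e) * (starRingEnd ℂ) (deriv g ((s:ℂ)*e))).re)
      ((e*d * (starRingEnd ℂ) c + c * (starRingEnd ℂ) (e*d)).re) t :=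
    re_curve (A2.mul (conj_curve A2))
  set D : ℝ := (e*b * (starRingEnd ℂ) a + a * (starRingEnd ℂ) (e*b)).re
    - (e*d * (starRingEnd ℂ) c + c * (starRingEnd ℂ) (e*d)).re with hD_def
  have N : HasDerivAt (fun s : ℝ => Jf h g ((s:ℂ)*e)) D t := by
    have hsub := r1.sub r2
    have hfun : (fun s : ℝ =>
        (deriv h ((s:ℂ)*e) * (starRingEnd ℂ) (deriv h ((s:ℂ)*e))).re
        - (deriv g ((s:ℂ)*e) * (starRingEnd ℂ) (deriv g ((s:ℂ)*e))).re)
        = fun s : ℝ => Jf h g ((s:ℂ)*e) := by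
      funext s
      simp only [Jf, Complex.mul_conj, Complex.ofReal_re, Complex.normSq_eq_norm_sq]
    rw [← hfun]; exact hsub
  have L2 : HasDerivAt (fun s : ℝ => Real.log (Jf h g ((s:ℂ)*e))) (D / J) t :=
    N.log hJpos.ne'
  have Ltot := L1.add (L2.const_mul (1/2 : ℝ))
  refine Ltot.congr_deriv ?_
  -- now prove the value identity
  have ha : a ≠ 0 := hh' w hw
  have hca : ‖c‖ < ‖a‖ := by
    have := hω w hw
    rw [dil, norm_div, div_lt_one (by simpa [norm_pos_iff] using ha)] at this
    exact this
  have hPf : Pf h g w = ((starRingEnd ℂ) a * b - (starRingEnd ℂ) c * d) / ((J : ℝ) : ℂ) :=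
    Pf_eq ⟨hh, hg, hh', hω⟩ hw
  have habsw : ‖w‖ ^ 2 = t^2 := by
    rw [hw_def, norm_mul, he, mul_one, Complex.norm_real, Real.norm_eq_abs, _root_.sq_abs]
  have hec : e * (starRingEnd ℂ) w = (t:ℂ) := by
    rw [hw_def, map_mul, Complex.conj_ofReal]
    have : e * ((t:ℂ) * (starRingEnd ℂ) e) = (t:ℂ) * (e * (starRingEnd ℂ) e) := by ring
    rw [this, Complex.mul_conj, Complex.normSq_eq_norm_sq, he]
    simp
  set Y : ℂ := (starRingEnd ℂ) a * b - (starRingEnd ℂ) c * d with hY_def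
  have hE : e * Af h g w = (((1 - t^2)/2 : ℝ) : ℂ) * ((e * Y) / ((J : ℝ) : ℂ)) - (t:ℂ) := by
    rw [Af, hPf, habsw]
    rw [← hec]
    push_cast
    ring
  have hre : (e * Af h g w).re = (1 - t^2)/2 * ((e * Y).re / J) - t := by
    rw [hE]
    simp [Complex.sub_re, Complex.re_ofReal_mul, Complex.div_ofReal_re, Complex.ofReal_re,
      ← Complex.ofReal_pow, Complex.ofReal_im]
  have hDY : D = 2 * (e * Y).re := by
    simp only [hD_def, hY_def, Complex.add_re, Complex.sub_re, Complex.mul_re, Complex.mul_im,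
      Complex.conj_re, Complex.conj_im, Complex.sub_im, Complex.add_im]
    ring
  rw [hre, hDY]
  field_simp
  ring


/-- if J_f(0) = 1 and |A_f| ≤ α on 𝔻, then
(1-|z|)^{2α-2}/(1+|z|)^{2α+2} ≤ J_f(z) ≤ (1+|z|)^{2α-2}/(1-|z|)^{2α+2}. -/
theorem stmt_17 (h g : ℂ → ℂ) (hf : SensePreserving h g) (α : ℝ) (hα : 0 ≤ α)
    (hJ0 : Jf h g 0 = 1)
    (hA : ∀ z ∈ 𝔻, ‖Af h g z‖ ≤ α) :
    ∀ z ∈ 𝔻,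
      (1 - ‖z‖) ^ (2 * α - 2) / (1 + ‖z‖) ^ (2 * α + 2) ≤ Jf h g z ∧
      Jf h g z ≤ (1 + ‖z‖) ^ (2 * α - 2) / (1 - ‖z‖) ^ (2 * α + 2) := by
  intro z hz
  rcases eq_or_ne z 0 with rfl | hz0
  · constructor <;> simp [hJ0, Real.one_rpow]
  · set r := ‖z‖ with hr_def
    have hr0 : 0 < r := norm_pos_iff.mpr hz0
    have hr1 : r < 1 := mem_disk.mp hz
    have hrc : ((r:ℝ):ℂ) ≠ 0 := by exact_mod_cast hr0.ne'
    set e : ℂ := z * (((r:ℝ):ℂ))⁻¹ with he_def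
    have he : ‖e‖ = 1 := by
      rw [he_def, norm_mul, norm_inv, Complex.norm_real, Real.norm_eq_abs, abs_of_pos hr0, ← hr_def,
        mul_inv_cancel₀ hr0.ne']
    have hz_eq : ((r:ℝ):ℂ) * e = z := by
      rw [he_def]; field_simp
    set v : ℝ → ℝ := fun s => Real.log (1 - s^2) + (1/2) * Real.log (Jf h g ((s:ℂ)*e))
      with hv_def
    set ψ : ℝ → ℝ := fun s => α * (Real.log (1+s) - Real.log (1-s)) with hψ_def
    have htlt : ∀ t ∈ Set.Icc (0:ℝ) r, |t| < 1 := by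
      intro t ht
      rcases ht with ⟨h1, h2⟩
      rw [abs_lt]; constructor <;> linarith
    have hv' : ∀ t ∈ Set.Icc (0:ℝ) r,
        HasDerivAt v (2 * (e * Af h g ((t:ℂ)*e)).re / (1 - t^2)) t := by
      intro t ht
      exact keyDeriv h g hf e he (htlt t ht)
    have hψ' : ∀ t ∈ Set.Icc (0:ℝ) r, HasDerivAt ψ (2*α/(1-t^2)) t := by
      intro t ht
      have habs := htlt t ht
      have h1t : (0:ℝ) < 1 + t := by have := abs_lt.mp habs; linarith
      have h2t : (0:ℝ) < 1 - t := by have := abs_lt.mp habs; linarith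
      have l1 : HasDerivAt (fun s:ℝ => Real.log (1+s)) (1/(1+t)) t := by
        have h1 : HasDerivAt (fun s:ℝ => 1 + s) 1 t := (hasDerivAt_id t).const_add 1
        simpa using h1.log h1t.ne'
      have l2 : HasDerivAt (fun s:ℝ => Real.log (1-s)) ((-1)/(1-t)) t := by
        have h2 : HasDerivAt (fun s:ℝ => 1 - s) (-1) t := (hasDerivAt_id t).const_sub 1
        simpa using h2.log h2t.ne'
      have ht2 : (0:ℝ) < 1 - t^2 := by nlinarith
      have := (l1.sub l2).const_mul α
      refine this.congr_deriv ?_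
      field_simp
      ring
    have hbound : ∀ t ∈ Set.Icc (0:ℝ) r,
        |2 * (e * Af h g ((t:ℂ)*e)).re / (1 - t^2)| ≤ 2*α/(1-t^2) := by
      intro t ht
      have habs := htlt t ht
      have ht2 : (0:ℝ) < 1 - t^2 := by
        have := abs_lt.mp habs; nlinarith
      have hw : ((t:ℂ)*e) ∈ 𝔻 := by
        rw [mem_disk, norm_mul, he, mul_one, Complex.norm_real, Real.norm_eq_abs]; exact habs
      have h1 : |(e * Af h g ((t:ℂ)*e)).re| ≤ α := by
        calc |(e * Af h g ((t:ℂ)*e)).re| ≤ ‖e * Af h g ((t:ℂ)*e)‖ :=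
              Complex.abs_re_le_norm _
          _ = ‖Af h g ((t:ℂ)*e)‖ := by rw [norm_mul, he, one_mul]
          _ ≤ α := hA _ hw
      rw [abs_div, abs_of_pos ht2, div_le_div_iff₀ ht2 ht2]
      have : |2 * (e * Af h g ((t:ℂ)*e)).re| ≤ 2 * α := by
        rw [abs_mul]
        calc |(2:ℝ)| * |(e * Af h g ((t:ℂ)*e)).re| = 2 * |(e * Af h g ((t:ℂ)*e)).re| := by
              norm_num
          _ ≤ 2 * α := by linarith
      nlinarith
    -- monotone comparisons
    have key : ∀ σ : ℝ, σ = 1 ∨ σ = -1 →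
        MonotoneOn (fun s => ψ s + σ * v s) (Set.Icc 0 r) := by
      intro σ hσ
      apply monotoneOn_of_deriv_nonneg (convex_Icc 0 r)
      · intro t ht
        exact (((hψ' t ht).add ((hv' t ht).const_mul σ)).continuousAt).continuousWithinAt
      · intro t ht
        rw [interior_Icc] at ht
        have ht' : t ∈ Set.Icc (0:ℝ) r := ⟨ht.1.le, ht.2.le⟩
        exact ((hψ' t ht').add ((hv' t ht').const_mul σ)).differentiableAt.differentiableWithinAt
      · intro t ht
        rw [interior_Icc] at ht
        have ht' : t ∈ Set.Icc (0:ℝ) r := ⟨ht.1.le, ht.2.le⟩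
        have hd : HasDerivAt (fun s => ψ s + σ * v s)
            (2*α/(1-t^2) + σ * (2 * (e * Af h g ((t:ℂ)*e)).re / (1 - t^2))) t :=
          (hψ' t ht').add ((hv' t ht').const_mul σ)
        rw [hd.deriv]
        have hb := hbound t ht'
        have hσ1 : |σ| = 1 := by rcases hσ with rfl | rfl <;> norm_num
        have : |σ * (2 * (e * Af h g ((t:ℂ)*e)).re / (1 - t^2))| ≤ 2*α/(1-t^2) := by
          rw [abs_mul, hσ1, one_mul]; exact hb
        have := abs_le.mp this
        linarith [this.1]
    have hmem0 : (0:ℝ) ∈ Set.Icc (0:ℝ) r := ⟨le_refl _, hr0.le⟩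
    have hmemr : r ∈ Set.Icc (0:ℝ) r := ⟨hr0.le, le_refl _⟩
    have hv0 : v 0 = 0 := by
      have : ((0:ℝ):ℂ) * e = 0 := by simp
      simp [hv_def, this, hJ0]
    have hψ0 : ψ 0 = 0 := by simp [hψ_def]
    have hvr : v r = Real.log (1 - r^2) + (1/2) * Real.log (Jf h g z) := by
      rw [hv_def]; simp only [hz_eq]
    have up : v r ≤ ψ r := by
      have := key (-1) (Or.inr rfl) hmem0 hmemr hr0.le
      simp only [neg_one_mul] at this
      linarith [this, hv0, hψ0]
    have lo : -ψ r ≤ v r := by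
      have := key 1 (Or.inl rfl) hmem0 hmemr hr0.le
      simp only [one_mul] at this
      linarith [this, hv0, hψ0]
    -- convert to the stated bounds
    have hJz : 0 < Jf h g z := Jf_pos hf hz
    have hp : (0:ℝ) < 1 + r := by linarith
    have hm : (0:ℝ) < 1 - r := by linarith
    have hlog2 : Real.log (1 - r^2) = Real.log (1-r) + Real.log (1+r) := by
      rw [show (1:ℝ) - r^2 = (1-r)*(1+r) by ring, Real.log_mul hm.ne' hp.ne']
    have hexp_up : Real.exp (2 * ψ r - 2 * Real.log (1 - r^2))
        = (1 + r) ^ (2*α - 2) / (1 - r) ^ (2*α + 2) := by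
      rw [Real.rpow_def_of_pos hp, Real.rpow_def_of_pos hm, ← Real.exp_sub]
      congr 1
      rw [hψ_def]
      simp only []
      rw [hlog2]
      ring
    have hexp_lo : Real.exp (-(2 * ψ r) - 2 * Real.log (1 - r^2))
        = (1 - r) ^ (2*α - 2) / (1 + r) ^ (2*α + 2) := by
      rw [Real.rpow_def_of_pos hm, Real.rpow_def_of_pos hp, ← Real.exp_sub]
      congr 1
      rw [hψ_def]
      simp only []
      rw [hlog2]
      ring
    constructor
    · -- lower bound
      rw [← hexp_lo]
      have hlogJ : -(2 * ψ r) - 2 * Real.log (1 - r^2) ≤ Real.log (Jf h g z) := by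
        have := lo
        rw [hvr] at this
        linarith
      calc Real.exp (-(2 * ψ r) - 2 * Real.log (1 - r^2)) ≤ Real.exp (Real.log (Jf h g z)) :=
            Real.exp_le_exp.mpr hlogJ
        _ = Jf h g z := Real.exp_log hJz
    · -- upper bound
      rw [← hexp_up]
      have hlogJ : Real.log (Jf h g z) ≤ 2 * ψ r - 2 * Real.log (1 - r^2) := by
        have := up
        rw [hvr] at this
        linarith
      calc Jf h g z = Real.exp (Real.log (Jf h g z)) := (Real.exp_log hJz).symm
        _ ≤ Real.exp (2 * ψ r - 2 * Real.log (1 - r^2)) := Real.exp_le_exp.mpr hlogJ
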